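/- Assume m0, m1, m2 are not collinear and let x ∈ ℝ² with x ∉ {m0, m1, m2}. Then the TDOA map τ₂ is differentiable at x, and the rank of its derivative Dτ₂(x) : ℝ² → ℝ² equals 1 if there exist distinct indices j, k ∈ {0,1,2} such that x lies on the affine line through m_j and m_k but not in the closed segment joining m_j and m_k; otherwise the rank of Dτ₂(x) equals 2. -/

import Mathlib

open scoped RealInnerProductSpace

noncomputable def tau2 (m0 m1 m2 : EuclideanSpace ℝ (Fin 2)) (x : EuclideanSpace ℝ (Fin 2)) :
    ℝ × ℝ :=
  (‖x - m1‖ - ‖x - m0‖, ‖x - m2‖ - ‖x - m0‖)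

section Aux

local notation "E2" => EuclideanSpace ℝ (Fin 2)

/-- Derivative of the distance-to-a-point function. -/
lemma hasFDerivAt_norm_sub (m x : EuclideanSpace ℝ (Fin 2)) (hxm : x ≠ m) :
    HasFDerivAt (fun y => ‖y - m‖) (innerSL ℝ (‖x - m‖⁻¹ • (x - m))) x := by
  have hne : x - m ≠ 0 := sub_ne_zero.mpr hxm
  have h1 : HasFDerivAt (fun y : E2 => y - m) (ContinuousLinearMap.id ℝ E2) x :=
    (hasFDerivAt_id x).sub_const m
  have h2 := (h1.inner ℝ h1).sqrt (by
    simp only [inner_self_ne_zero]; exact hne)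
  have hfun : (fun y : E2 => Real.sqrt ⟪y - m, y - m⟫) = fun y : E2 => ‖y - m‖ := by
    funext y; rw [← norm_eq_sqrt_real_inner]
  rw [hfun] at h2
  refine h2.congr_fderiv ?_
  symm
  ext v
  have hnorm : Real.sqrt ⟪x - m, x - m⟫ = ‖x - m‖ := (norm_eq_sqrt_real_inner _).symm
  have hpos : (0:ℝ) < ‖x - m‖ := norm_pos_iff.mpr hne
  simp only [innerSL_apply_apply, ContinuousLinearMap.smul_apply, ContinuousLinearMap.comp_apply,
    ContinuousLinearMap.prod_apply, ContinuousLinearMap.id_apply, fderivInnerCLM_apply,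
    real_inner_smul_left, smul_eq_mul, hnorm]
  rw [real_inner_comm v (x - m)]
  field_simp
  ring

lemma tau2_hasFDerivAt (m0 m1 m2 x : EuclideanSpace ℝ (Fin 2))
    (h0 : x ≠ m0) (h1 : x ≠ m1) (h2 : x ≠ m2) :
    HasFDerivAt (tau2 m0 m1 m2)
      (((innerSL ℝ (‖x - m1‖⁻¹ • (x - m1)) - innerSL ℝ (‖x - m0‖⁻¹ • (x - m0))).prod
        (innerSL ℝ (‖x - m2‖⁻¹ • (x - m2)) - innerSL ℝ (‖x - m0‖⁻¹ • (x - m0))))) x :=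
  ((hasFDerivAt_norm_sub m1 x h1).sub (hasFDerivAt_norm_sub m0 x h0)).prodMk
    ((hasFDerivAt_norm_sub m2 x h2).sub (hasFDerivAt_norm_sub m0 x h0))

/-- Unit vectors from `x` towards `p` and `q` agree iff `x` is on the line through `p, q`
but not on the segment. -/
lemma unit_eq_iff (p q x : EuclideanSpace ℝ (Fin 2)) (hp : x ≠ p) (hq : x ≠ q) (hpq : p ≠ q) :
    ‖x - p‖⁻¹ • (x - p) = ‖x - q‖⁻¹ • (x - q) ↔
      (x ∈ affineSpan ℝ ({p, q} : Set (EuclideanSpace ℝ (Fin 2))) ∧ x ∉ segment ℝ p q) := by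
  have hvp : x - p ≠ 0 := sub_ne_zero.mpr hp
  have hvq : x - q ≠ 0 := sub_ne_zero.mpr hq
  have hline : x ∈ affineSpan ℝ ({p, q} : Set E2) ↔ ∃ t : ℝ, t • (q - p) = x - p := by
    have : x = (x - p) +ᵥ p := by simp
    rw [this, vadd_left_mem_affineSpan_pair]
    simp [vsub_eq_sub]
  rw [← sameRay_iff_inv_norm_smul_eq_of_ne hvp hvq]
  constructor
  · intro hray
    obtain ⟨r1, r2, hr1, hr2, hr⟩ := hray.exists_pos hvp hvq
    have hc : x - q = (r1 / r2) • (x - p) := by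
      rw [eq_comm, div_eq_mul_inv, mul_comm, mul_smul, hr, smul_smul, inv_mul_cancel₀ hr2.ne',
        one_smul]
    set c : ℝ := r1 / r2 with hcdef
    have hcpos : 0 < c := div_pos hr1 hr2
    have hc1 : c ≠ 1 := by
      intro h
      rw [h, one_smul] at hc
      exact hpq (sub_right_injective hc).symm
    constructor
    · rw [hline]
      refine ⟨(1 - c)⁻¹, ?_⟩
      have hqp : q - p = (1 - c) • (x - p) := by
        have : q - p = (x - p) - (x - q) := by abel
        rw [this, hc, sub_smul, one_smul]
      rw [hqp, smul_smul, inv_mul_cancel₀ (sub_ne_zero.mpr (Ne.symm hc1)), one_smul]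
    · intro hseg
      rw [mem_segment_iff_sameRay] at hseg
      have hqx : q - x = (-c) • (x - p) := by
        rw [neg_smul, ← hc]; abel
      obtain ⟨s1, s2, hs1, hs2, hs⟩ := hseg.exists_pos hvp (by
        rw [hqx]; exact smul_ne_zero (neg_ne_zero.mpr hcpos.ne') hvp)
      rw [hqx, smul_smul] at hs
      have : (s1 - s2 * (-c)) • (x - p) = 0 := by rw [sub_smul, hs, sub_self]
      have h0 : s1 - s2 * (-c) = 0 := by
        rcases smul_eq_zero.mp this with h' | h'
        · exact h'
        · exact absurd h' hvp
      nlinarith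
  · rintro ⟨hmem, hseg⟩
    rw [hline] at hmem
    obtain ⟨t, ht⟩ := hmem
    set d : E2 := q - p with hd
    have hdne : d ≠ 0 := sub_ne_zero.mpr (Ne.symm hpq)
    have hxq : x - q = (t - 1) • d := by
      have : x - q = (x - p) - d := by rw [hd]; abel
      rw [this, ← ht, sub_smul, one_smul]
    have ht0 : t ≠ 0 := by
      intro h; rw [h, zero_smul] at ht; exact hvp ht.symm
    have ht1 : t ≠ 1 := by
      intro h; rw [h, one_smul] at ht
      exact hvq (by rw [hxq, h, sub_self, zero_smul])
    have hrange : t < 0 ∨ 1 < t := by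
      by_contra h
      push_neg at h
      obtain ⟨h1, h2⟩ := h
      apply hseg
      rw [mem_segment_iff_sameRay]
      refine Or.inr (Or.inr ⟨1 - t, t, ?_, ?_, ?_⟩)
      · cases lt_or_eq_of_le h2 with
        | inl h => linarith
        | inr h => exact absurd h ht1
      · cases lt_or_eq_of_le h1 with
        | inl h => exact h
        | inr h => exact absurd h.symm ht0
      · have hqx : q - x = (1 - t) • d := by
          have : q - x = d - (x - p) := by rw [hd]; abel
          rw [this, ← ht, sub_smul, one_smul]
        rw [← ht, hqx, smul_smul, smul_smul, mul_comm]
    refine Or.inr (Or.inr ?_)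
    rcases hrange with h | h
    · exact ⟨1 - t, -t, by linarith, by linarith, by
        rw [← ht, hxq, smul_smul, smul_smul]; ring_nf⟩
    · exact ⟨t - 1, t, by linarith, by linarith, by
        rw [← ht, hxq, smul_smul, smul_smul]; ring_nf⟩

lemma collinear_of_two_eq (m0 m1 m2 x : EuclideanSpace ℝ (Fin 2))
    (h0 : x ≠ m0) (h1 : x ≠ m1) (h2 : x ≠ m2)
    (e1 : ‖x - m1‖⁻¹ • (x - m1) = ‖x - m0‖⁻¹ • (x - m0))
    (e2 : ‖x - m2‖⁻¹ • (x - m2) = ‖x - m0‖⁻¹ • (x - m0)) :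
    Collinear ℝ ({m0, m1, m2} : Set (EuclideanSpace ℝ (Fin 2))) := by
  have key : ∀ (m : E2), x ≠ m → ‖x - m‖⁻¹ • (x - m) = ‖x - m0‖⁻¹ • (x - m0) →
      ∃ r : ℝ, m = r • (x - m0) +ᵥ x := by
    intro m hm he
    have hne : x - m ≠ 0 := sub_ne_zero.mpr hm
    have hnorm : ‖x - m‖ ≠ 0 := norm_ne_zero_iff.mpr hne
    have : x - m = (‖x - m‖ * ‖x - m0‖⁻¹) • (x - m0) := by
      rw [mul_smul, ← he, smul_smul, mul_inv_cancel₀ hnorm, one_smul]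
    refine ⟨-(‖x - m‖ * ‖x - m0‖⁻¹), ?_⟩
    rw [neg_smul, ← this]
    simp only [vadd_eq_add]; abel
  rw [collinear_iff_exists_forall_eq_smul_vadd]
  refine ⟨x, x - m0, ?_⟩
  intro p hp
  simp only [Set.mem_insert_iff, Set.mem_singleton_iff] at hp
  rcases hp with h | h | h
  · rw [h]; exact key m0 h0 rfl
  · rw [h]; exact key m1 h1 e1
  · rw [h]; exact key m2 h2 e2

lemma rank_eq_one_of (f : EuclideanSpace ℝ (Fin 2) →ₗ[ℝ] ℝ × ℝ) (w : ℝ × ℝ) (hw : w ≠ 0)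
    (hmem : w ∈ LinearMap.range f)
    (hspan : ∀ v, f v ∈ Submodule.span ℝ ({w} : Set (ℝ × ℝ))) :
    LinearMap.rank f = 1 := by
  have hr : LinearMap.range f = Submodule.span ℝ ({w} : Set (ℝ × ℝ)) := by
    apply le_antisymm
    · rintro y ⟨v, rfl⟩; exact hspan v
    · rw [Submodule.span_le, Set.singleton_subset_iff]; exact hmem
  show Module.rank ℝ (LinearMap.range f) = 1
  rw [hr, ← Module.finrank_eq_rank, finrank_span_singleton hw, Nat.cast_one]

lemma rank_eq_two_of (f : EuclideanSpace ℝ (Fin 2) →ₗ[ℝ] ℝ × ℝ)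
    (hinj : Function.Injective f) :
    LinearMap.rank f = 2 := by
  show Module.rank ℝ (LinearMap.range f) = 2
  rw [rank_range_of_injective f hinj, ← Module.finrank_eq_rank,
    finrank_euclideanSpace_fin]
  norm_num

lemma inj_of_indep (a b : EuclideanSpace ℝ (Fin 2)) (hli : LinearIndependent ℝ ![a, b]) :
    ∀ v : EuclideanSpace ℝ (Fin 2), ⟪a, v⟫ = 0 → ⟪b, v⟫ = 0 → v = 0 := by
  intro v ha hb
  have hsp : Submodule.span ℝ (Set.range ![a, b]) = ⊤ :=
    hli.span_eq_top_of_card_eq_finrank (by simp [finrank_euclideanSpace_fin])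
  have hall : ∀ u ∈ Submodule.span ℝ (Set.range ![a, b]), ⟪u, v⟫ = 0 := by
    intro u hu
    induction hu using Submodule.span_induction with
    | mem z hz =>
      obtain ⟨i, rfl⟩ := hz
      fin_cases i
      · simpa using ha
      · simpa using hb
    | zero => simp
    | add y z _ _ hy hz => rw [inner_add_left, hy, hz, add_zero]
    | smul c y _ hy => rw [inner_smul_left, hy, mul_zero]
  have := hall v (by rw [hsp]; trivial)
  exact inner_self_eq_zero.mp this

lemma indep_of_units (u0 u1 u2 : EuclideanSpace ℝ (Fin 2))
    (h0 : ‖u0‖ = 1) (h1 : ‖u1‖ = 1) (h2 : ‖u2‖ = 1)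
    (h01 : u1 ≠ u0) (h02 : u2 ≠ u0) (h12 : u1 ≠ u2) :
    LinearIndependent ℝ ![u1 - u0, u2 - u0] := by
  have key : ∀ p q : E2, ‖p‖ = 1 → ‖q‖ = 1 → ⟪p - q, p + q⟫ = 0 := by
    intro p q hp hq
    have := real_inner_self_eq_norm_sq p
    have := real_inner_self_eq_norm_sq q
    have := real_inner_comm p q
    simp only [inner_sub_left, inner_add_right]
    rw [real_inner_self_eq_norm_sq, real_inner_self_eq_norm_sq, hp, hq, real_inner_comm p q]
    ring
  rw [linearIndependent_fin2]
  constructor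
  · simpa using sub_ne_zero.mpr h02
  · intro c hc
    simp only [Matrix.cons_val_one, Matrix.head_cons, Matrix.cons_val_zero] at hc
    -- hc : c • (u2 - u0) = u1 - u0
    set b : E2 := u2 - u0 with hbdef
    have hbne : b ≠ 0 := sub_ne_zero.mpr h02
    have hcne : c ≠ 0 := by
      intro h; rw [h, zero_smul] at hc
      exact h01 (sub_eq_zero.mp hc.symm)
    have hb2 : ⟪b, u2 + u0⟫ = 0 := key u2 u0 h2 h0
    have hb1 : ⟪b, u1 + u0⟫ = 0 := by
      have ha1 : ⟪u1 - u0, u1 + u0⟫ = 0 := key u1 u0 h1 h0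
      rw [← hc, real_inner_smul_left] at ha1
      exact (mul_eq_zero.mp ha1).resolve_left hcne
    have hdiff : ⟪b, u1 - u2⟫ = 0 := by
      have : u1 - u2 = (u1 + u0) - (u2 + u0) := by abel
      rw [this, inner_sub_right, hb1, hb2, sub_zero]
    have h12' : u1 - u2 = (c - 1) • b := by
      have : u1 - u2 = (u1 - u0) - b := by rw [hbdef]; abel
      rw [this, ← hc, sub_smul, one_smul]
    rw [h12', real_inner_smul_right, real_inner_self_eq_norm_sq] at hdiff
    have hc1 : c = 1 := by
      have hbn : ‖b‖ ≠ 0 := norm_ne_zero_iff.mpr hbne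
      rcases mul_eq_zero.mp hdiff with h | h
      · linarith [sub_eq_zero.mp h]
      · exact absurd h (pow_ne_zero 2 hbn)
    rw [hc1, one_smul] at hc
    exact h12 (sub_left_injective hc).symm

end Aux

theorem stmt0 (m0 m1 m2 : EuclideanSpace ℝ (Fin 2))
    (hnc : ¬ Collinear ℝ ({m0, m1, m2} : Set (EuclideanSpace ℝ (Fin 2))))
    (x : EuclideanSpace ℝ (Fin 2))
    (hx : x ∉ ({m0, m1, m2} : Set (EuclideanSpace ℝ (Fin 2)))) :
    DifferentiableAt ℝ (tau2 m0 m1 m2) x ∧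
    ((∃ j k : Fin 3, j ≠ k ∧
        x ∈ affineSpan ℝ ({![m0, m1, m2] j, ![m0, m1, m2] k} : Set (EuclideanSpace ℝ (Fin 2))) ∧
        x ∉ segment ℝ (![m0, m1, m2] j) (![m0, m1, m2] k)) →
      LinearMap.rank
        ((fderiv ℝ (tau2 m0 m1 m2) x : EuclideanSpace ℝ (Fin 2) →L[ℝ] ℝ × ℝ) :
          EuclideanSpace ℝ (Fin 2) →ₗ[ℝ] ℝ × ℝ) = 1) ∧
    (¬ (∃ j k : Fin 3, j ≠ k ∧
        x ∈ affineSpan ℝ ({![m0, m1, m2] j, ![m0, m1, m2] k} : Set (EuclideanSpace ℝ (Fin 2))) ∧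
        x ∉ segment ℝ (![m0, m1, m2] j) (![m0, m1, m2] k)) →
      LinearMap.rank
        ((fderiv ℝ (tau2 m0 m1 m2) x : EuclideanSpace ℝ (Fin 2) →L[ℝ] ℝ × ℝ) :
          EuclideanSpace ℝ (Fin 2) →ₗ[ℝ] ℝ × ℝ) = 2) := by
  simp only [Set.mem_insert_iff, Set.mem_singleton_iff, not_or] at hx
  obtain ⟨hx0, hx1, hx2⟩ := hx
  have hm01 : m0 ≠ m1 := by
    rintro rfl
    refine hnc ?_
    have hset : ({m0, m0, m2} : Set (EuclideanSpace ℝ (Fin 2))) = {m0, m2} := by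
      ext y; simp; try tauto
    rw [hset]; exact collinear_pair ℝ m0 m2
  have hm02 : m0 ≠ m2 := by
    rintro rfl
    refine hnc ?_
    have hset : ({m0, m1, m0} : Set (EuclideanSpace ℝ (Fin 2))) = {m0, m1} := by
      ext y; simp; try tauto
    rw [hset]; exact collinear_pair ℝ m0 m1
  have hm12 : m1 ≠ m2 := by
    rintro rfl
    refine hnc ?_
    have hset : ({m0, m1, m1} : Set (EuclideanSpace ℝ (Fin 2))) = {m0, m1} := by
      ext y; simp; try tauto
    rw [hset]; exact collinear_pair ℝ m0 m1
  have hne0 : x - m0 ≠ 0 := sub_ne_zero.mpr hx0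
  have hne1 : x - m1 ≠ 0 := sub_ne_zero.mpr hx1
  have hne2 : x - m2 ≠ 0 := sub_ne_zero.mpr hx2
  set u0 : EuclideanSpace ℝ (Fin 2) := ‖x - m0‖⁻¹ • (x - m0) with hu0def
  set u1 : EuclideanSpace ℝ (Fin 2) := ‖x - m1‖⁻¹ • (x - m1) with hu1def
  set u2 : EuclideanSpace ℝ (Fin 2) := ‖x - m2‖⁻¹ • (x - m2) with hu2def
  have hu0n : ‖u0‖ = 1 := norm_smul_inv_norm hne0
  have hu1n : ‖u1‖ = 1 := norm_smul_inv_norm hne1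
  have hu2n : ‖u2‖ = 1 := norm_smul_inv_norm hne2
  have hder := tau2_hasFDerivAt m0 m1 m2 x hx0 hx1 hx2
  have hfd := hder.fderiv
  have hfl : ∀ v, ((fderiv ℝ (tau2 m0 m1 m2) x :
        EuclideanSpace ℝ (Fin 2) →L[ℝ] ℝ × ℝ) :
        EuclideanSpace ℝ (Fin 2) →ₗ[ℝ] ℝ × ℝ) v = (⟪u1 - u0, v⟫, ⟪u2 - u0, v⟫) := by
    intro v
    rw [ContinuousLinearMap.coe_coe, hfd]
    simp only [ContinuousLinearMap.prod_apply, ContinuousLinearMap.sub_apply, innerSL_apply_apply,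
      inner_sub_left]
    rfl
  -- at most one coincidence among the unit vectors
  have hnotall : ¬ (u1 = u0 ∧ u2 = u0) := by
    rintro ⟨h1, h2⟩
    exact hnc (collinear_of_two_eq m0 m1 m2 x hx0 hx1 hx2 h1 h2)
  refine ⟨hder.differentiableAt, ?_, ?_⟩
  · rintro ⟨j, k, hjk, hl, hs⟩
    have hcase : u1 = u0 ∨ u2 = u0 ∨ u1 = u2 := by
      fin_cases j <;> fin_cases k <;>
        simp only [Matrix.cons_val_zero, Matrix.cons_val_one, Matrix.head_cons,
          Matrix.cons_val_two, Matrix.tail_cons] at hl hs <;>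
      first
      | exact absurd rfl hjk
      | exact Or.inl ((unit_eq_iff m0 m1 x hx0 hx1 hm01).mpr ⟨hl, hs⟩).symm
      | exact Or.inl ((unit_eq_iff m1 m0 x hx1 hx0 hm01.symm).mpr ⟨hl, hs⟩)
      | exact Or.inr (Or.inl ((unit_eq_iff m0 m2 x hx0 hx2 hm02).mpr ⟨hl, hs⟩).symm)
      | exact Or.inr (Or.inl ((unit_eq_iff m2 m0 x hx2 hx0 hm02.symm).mpr ⟨hl, hs⟩))
      | exact Or.inr (Or.inr ((unit_eq_iff m1 m2 x hx1 hx2 hm12).mpr ⟨hl, hs⟩))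
      | exact Or.inr (Or.inr ((unit_eq_iff m2 m1 x hx2 hx1 hm12.symm).mpr ⟨hl, hs⟩).symm)
    rcases hcase with h | h | h
    · -- u1 = u0 : first component vanishes
      have hbne : u2 - u0 ≠ 0 := sub_ne_zero.mpr (fun h2 => hnotall ⟨h, h2⟩)
      have hbn : ‖u2 - u0‖ ≠ 0 := norm_ne_zero_iff.mpr hbne
      refine rank_eq_one_of _ ((0 : ℝ), (1 : ℝ)) (by simp) ?_ ?_
      · refine ⟨(‖u2 - u0‖ ^ 2)⁻¹ • (u2 - u0), ?_⟩
        rw [hfl, h, sub_self]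
        simp only [inner_zero_left, real_inner_smul_right, real_inner_self_eq_norm_sq]
        rw [inv_mul_cancel₀ (pow_ne_zero 2 hbn)]
      · intro v
        rw [hfl, h, sub_self]
        refine Submodule.mem_span_singleton.mpr ⟨⟪u2 - u0, v⟫, ?_⟩
        simp [Prod.ext_iff]
    · -- u2 = u0 : second component vanishes
      have hbne : u1 - u0 ≠ 0 := sub_ne_zero.mpr (fun h1 => hnotall ⟨h1, h⟩)
      have hbn : ‖u1 - u0‖ ≠ 0 := norm_ne_zero_iff.mpr hbne
      refine rank_eq_one_of _ ((1 : ℝ), (0 : ℝ)) (by simp) ?_ ?_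
      · refine ⟨(‖u1 - u0‖ ^ 2)⁻¹ • (u1 - u0), ?_⟩
        rw [hfl, h, sub_self]
        simp only [inner_zero_left, real_inner_smul_right, real_inner_self_eq_norm_sq]
        rw [inv_mul_cancel₀ (pow_ne_zero 2 hbn)]
      · intro v
        rw [hfl, h, sub_self]
        refine Submodule.mem_span_singleton.mpr ⟨⟪u1 - u0, v⟫, ?_⟩
        simp [Prod.ext_iff]
    · -- u1 = u2 : the two components agree
      have hbne : u1 - u0 ≠ 0 := by
        refine sub_ne_zero.mpr (fun h1 => hnotall ⟨h1, ?_⟩)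
        rw [← h]; exact h1
      have hbn : ‖u1 - u0‖ ≠ 0 := norm_ne_zero_iff.mpr hbne
      refine rank_eq_one_of _ ((1 : ℝ), (1 : ℝ)) (by simp) ?_ ?_
      · refine ⟨(‖u1 - u0‖ ^ 2)⁻¹ • (u1 - u0), ?_⟩
        rw [hfl, ← h]
        simp only [real_inner_smul_right, real_inner_self_eq_norm_sq]
        rw [inv_mul_cancel₀ (pow_ne_zero 2 hbn)]
      · intro v
        rw [hfl, ← h]
        refine Submodule.mem_span_singleton.mpr ⟨⟪u1 - u0, v⟫, ?_⟩
        simp [Prod.ext_iff]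
  · intro hP
    have h10 : u1 ≠ u0 := by
      intro h
      have hc := (unit_eq_iff m0 m1 x hx0 hx1 hm01).mp h.symm
      exact hP ⟨0, 1, by decide, by simpa using hc.1, by simpa using hc.2⟩
    have h20 : u2 ≠ u0 := by
      intro h
      have hc := (unit_eq_iff m0 m2 x hx0 hx2 hm02).mp h.symm
      exact hP ⟨0, 2, by decide,
        by simpa [Matrix.cons_val_two, Matrix.tail_cons] using hc.1,
        by simpa [Matrix.cons_val_two, Matrix.tail_cons] using hc.2⟩
    have h12 : u1 ≠ u2 := by
      intro h
      have hc := (unit_eq_iff m1 m2 x hx1 hx2 hm12).mp h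
      exact hP ⟨1, 2, by decide,
        by simpa [Matrix.cons_val_two, Matrix.tail_cons] using hc.1,
        by simpa [Matrix.cons_val_two, Matrix.tail_cons] using hc.2⟩
    have hli := indep_of_units u0 u1 u2 hu0n hu1n hu2n h10 h20 h12
    refine rank_eq_two_of _ ?_
    intro v w hvw
    have hzero : ((fderiv ℝ (tau2 m0 m1 m2) x :
        EuclideanSpace ℝ (Fin 2) →L[ℝ] ℝ × ℝ) :
        EuclideanSpace ℝ (Fin 2) →ₗ[ℝ] ℝ × ℝ) (v - w) = 0 := by
      rw [map_sub, hvw, sub_self]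
    rw [hfl] at hzero
    have h1 : ⟪u1 - u0, v - w⟫ = 0 := congrArg Prod.fst hzero
    have h2 : ⟪u2 - u0, v - w⟫ = 0 := congrArg Prod.snd hzero
    have := inj_of_indep (u1 - u0) (u2 - u0) hli (v - w) h1 h2
    exact sub_eq_zero.mp this
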